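/- Let K be a compact Hausdorff abelian topological group and let Λ₁ and Λ₂ be countable abelian groups, each equipped with the discrete topology. Suppose there exists an isomorphism of topological groups θ : K × Λ₁ ≅ K × Λ₂. Then Λ₁ and Λ₂ are virtually isomorphic: there exist an abelian group E and finite subgroups F₁, F₂ of E such that E/F₁ ≅ Λ₁ and E/F₂ ≅ Λ₂. -/

import Mathlib

/-- If `K` is a compact Hausdorff abelian topological group, `Λ₁, Λ₂` are countable abelian
groups with the discrete topology, and `K × Λ₁ ≅ K × Λ₂` as topological groups, then `Λ₁`
and `Λ₂` are virtually isomorphic: they are quotients of a common abelian group by finite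
subgroups. -/
theorem stmt13 {K Λ₁ Λ₂ : Type*} [CommGroup K] [TopologicalSpace K] [IsTopologicalGroup K]
    [CompactSpace K] [T2Space K]
    [CommGroup Λ₁] [Countable Λ₁] [TopologicalSpace Λ₁] [DiscreteTopology Λ₁]
    [CommGroup Λ₂] [Countable Λ₂] [TopologicalSpace Λ₂] [DiscreteTopology Λ₂]
    (θ : (K × Λ₁) ≃* (K × Λ₂)) (hθ : Continuous θ) (hθsymm : Continuous θ.symm) :
    ∃ (E : Type) (_ : CommGroup E) (F₁ F₂ : Subgroup E),
      Finite F₁ ∧ Finite F₂ ∧ Nonempty ((E ⧸ F₁) ≃* Λ₁) ∧ Nonempty ((E ⧸ F₂) ≃* Λ₂) := by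
  classical
  haveI : IsTopologicalGroup Λ₁ :=
    { continuous_mul := continuous_of_discreteTopology,
      continuous_inv := continuous_of_discreteTopology }
  set H₁ : Subgroup (K × Λ₁) := (⊤ : Subgroup K).prod ⊥ with hH₁def
  set H₂ : Subgroup (K × Λ₁) :=
    ((⊤ : Subgroup K).prod (⊥ : Subgroup Λ₂)).comap θ.toMonoidHom with hH₂def
  set N : Subgroup (K × Λ₁) := H₁ ⊓ H₂ with hNdef
  -- basic set descriptions
  have hH₁set : (H₁ : Set (K × Λ₁)) = Set.univ ×ˢ ({1} : Set Λ₁) := by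
    rw [hH₁def, Subgroup.coe_prod]; simp
  have hH₂set : (H₂ : Set (K × Λ₁)) = θ ⁻¹' (Set.univ ×ˢ ({1} : Set Λ₂)) := by
    rw [hH₂def, Subgroup.coe_comap, Subgroup.coe_prod]; simp
  -- openness
  have hH₁open : IsOpen (H₁ : Set (K × Λ₁)) := by
    rw [hH₁set]; exact isOpen_univ.prod (isOpen_discrete _)
  have hH₂open : IsOpen (H₂ : Set (K × Λ₁)) := by
    rw [hH₂set]; exact (isOpen_univ.prod (isOpen_discrete _)).preimage hθ
  have hNopen : IsOpen (N : Set (K × Λ₁)) := by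
    rw [hNdef, Subgroup.coe_inf]; exact hH₁open.inter hH₂open
  -- compactness
  have hH₁cpt : IsCompact (H₁ : Set (K × Λ₁)) := by
    rw [hH₁set]; exact isCompact_univ.prod isCompact_singleton
  have hH₂cpt : IsCompact (H₂ : Set (K × Λ₁)) := by
    have : (H₂ : Set (K × Λ₁)) = θ.symm '' (Set.univ ×ˢ ({1} : Set Λ₂)) := by
      rw [hH₂set]
      ext x
      simp only [Set.mem_preimage, Set.mem_image]
      constructor
      · intro h; exact ⟨θ x, h, θ.symm_apply_apply x⟩
      · rintro ⟨y, hy, rfl⟩; rwa [θ.apply_symm_apply]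
    rw [this]
    exact (isCompact_univ.prod isCompact_singleton).image hθsymm
  -- finiteness of quotients of the compact open subgroups by the open subgroup N
  have finquot : ∀ (H : Subgroup (K × Λ₁)), IsCompact (H : Set (K × Λ₁)) →
      Finite (H ⧸ (N.subgroupOf H)) := by
    intro H hc
    have : CompactSpace H := isCompact_iff_compactSpace.mp hc
    refine Subgroup.quotient_finite_of_isOpen _ ?_
    have : (N.subgroupOf H : Set H) = Subtype.val ⁻¹' (N : Set (K × Λ₁)) := rfl
    rw [this]
    exact hNopen.preimage continuous_subtype_val
  -- the images of H₁, H₂ in (K × Λ₁) ⧸ N are finite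
  have finmap : ∀ (H : Subgroup (K × Λ₁)), IsCompact (H : Set (K × Λ₁)) →
      Finite (H.map (QuotientGroup.mk' N)) := by
    intro H hc
    have h1 : Finite (H ⧸ (N.subgroupOf H)) := finquot H hc
    have hker : ((QuotientGroup.mk' N).domRestrict H).ker = N.subgroupOf H := by
      rw [MonoidHom.ker_domRestrict, QuotientGroup.ker_mk']
    have h1' : Finite (↥H ⧸ ((QuotientGroup.mk' N).domRestrict H).ker) := by rwa [hker]
    have e := QuotientGroup.quotientKerEquivRange ((QuotientGroup.mk' N).domRestrict H)
    have e' := e.trans (MulEquiv.subgroupCongr (MonoidHom.domRestrict_range (K := H) (QuotientGroup.mk' N)))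
    exact Finite.of_equiv _ e'.toEquiv
  have finF₁ : Finite (H₁.map (QuotientGroup.mk' N)) := finmap H₁ hH₁cpt
  have finF₂ : Finite (H₂.map (QuotientGroup.mk' N)) := finmap H₂ hH₂cpt
  -- quotient isomorphisms
  have e₁ : ((K × Λ₁) ⧸ H₁) ≃* Λ₁ := by
    have hker : (MonoidHom.snd K Λ₁).ker = H₁ := MonoidHom.ker_snd
    exact (QuotientGroup.quotientMulEquivOfEq hker.symm).trans
      (QuotientGroup.quotientKerEquivOfSurjective _ (fun x => ⟨(1, x), rfl⟩))
  have e₂ : ((K × Λ₁) ⧸ H₂) ≃* Λ₂ := by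
    have hker : ((MonoidHom.snd K Λ₂).comp θ.toMonoidHom).ker = H₂ := by
      rw [← MonoidHom.comap_ker, MonoidHom.ker_snd]
    have hsurj : Function.Surjective ((MonoidHom.snd K Λ₂).comp θ.toMonoidHom) := by
      intro x; exact ⟨θ.symm (1, x), by simp⟩
    exact (QuotientGroup.quotientMulEquivOfEq hker.symm).trans
      (QuotientGroup.quotientKerEquivOfSurjective _ hsurj)
  have q₁ : (((K × Λ₁) ⧸ N) ⧸ H₁.map (QuotientGroup.mk' N)) ≃* Λ₁ :=
    (QuotientGroup.quotientQuotientEquivQuotient N H₁ inf_le_left).trans e₁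
  have q₂ : (((K × Λ₁) ⧸ N) ⧸ H₂.map (QuotientGroup.mk' N)) ≃* Λ₂ :=
    (QuotientGroup.quotientQuotientEquivQuotient N H₂ inf_le_right).trans e₂
  -- countability of (K × Λ₁) ⧸ N
  have hcount : Countable ((K × Λ₁) ⧸ N) := by
    have c1 : Countable (((K × Λ₁) ⧸ N) ⧸ H₁.map (QuotientGroup.mk' N)) :=
      Countable.of_equiv _ q₁.toEquiv.symm
    have c2 : Countable (H₁.map (QuotientGroup.mk' N)) := Finite.to_countable
    exact Countable.of_equiv _
      (Subgroup.groupEquivQuotientProdSubgroup (s := H₁.map (QuotientGroup.mk' N))).symm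
  have : Small.{0} ((K × Λ₁) ⧸ N) := Countable.toSmall _
  -- shrink to Type 0
  let E : Type := Shrink ((K × Λ₁) ⧸ N)
  let e : E ≃* ((K × Λ₁) ⧸ N) := Shrink.mulEquiv
  refine ⟨E, inferInstance, (H₁.map (QuotientGroup.mk' N)).comap e.toMonoidHom,
    (H₂.map (QuotientGroup.mk' N)).comap e.toMonoidHom, ?_, ?_, ?_, ?_⟩
  · rw [Subgroup.comap_equiv_eq_map_symm']
    exact Finite.of_equiv _ (Subgroup.equivMapOfInjective _ _ e.symm.injective).toEquiv
  · rw [Subgroup.comap_equiv_eq_map_symm']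
    exact Finite.of_equiv _ (Subgroup.equivMapOfInjective _ _ e.symm.injective).toEquiv
  · exact ⟨(QuotientGroup.congr _ _ e
      (Subgroup.map_comap_eq_self_of_surjective e.surjective _)).trans q₁⟩
  · exact ⟨(QuotientGroup.congr _ _ e
      (Subgroup.map_comap_eq_self_of_surjective e.surjective _)).trans q₂⟩
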